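/- Let K ⊆ [q]. If u ≤ u′ in the weak order on B_p and v ≤ v′ in the weak order with v, v′ ∈ B_{q,K}, then {x × y : x ∈ [u,u′], y ∈ [v,v′]} equals the weak-order interval [u × v, u′ × v′] in B_{p+q}. -/

import Mathlib

open Finset

open scoped Classical

/-- The hyperoctahedral group `𝔅ₙ`, realized as the set of those permutations `w` of `ℤ`
that satisfy `w (-i) = - w i` for all `i` and fix every integer of absolute value `> n`.
One-line notation: `w₁ ⋯ w_n` with `w_i = w i` for `1 ≤ i ≤ n`. -/
def SignedPerm (n : ℕ) : Set (Equiv.Perm ℤ) :=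
  {w | (∀ i : ℤ, w (-i) = - w i) ∧ (∀ i : ℤ, (n : ℤ) < |i| → w i = i)}

/-- The inversion set `Inv(w) = {(i,j) : 1 ≤ i < j ≤ n, w_i > w_j}`. -/
noncomputable def InvSet (n : ℕ) (w : Equiv.Perm ℤ) : Finset (ℤ × ℤ) :=
  ((Finset.Icc (1 : ℤ) (n : ℤ)) ×ˢ (Finset.Icc (1 : ℤ) (n : ℤ))).filter
    fun p => p.1 < p.2 ∧ w p.2 < w p.1

/-- The set of negative indices `Nega(w) = {i ∈ [n] : w_i < 0}`. -/
noncomputable def NegaSet (n : ℕ) (w : Equiv.Perm ℤ) : Finset ℤ :=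
  (Finset.Icc (1 : ℤ) (n : ℤ)).filter fun i => w i < 0

/-- The negative sum pair set `Nsp(w) = {(i,j) : 1 ≤ i < j ≤ n, w_i + w_j < 0}`. -/
noncomputable def NspSet (n : ℕ) (w : Equiv.Perm ℤ) : Finset (ℤ × ℤ) :=
  ((Finset.Icc (1 : ℤ) (n : ℤ)) ×ˢ (Finset.Icc (1 : ℤ) (n : ℤ))).filter
    fun p => p.1 < p.2 ∧ w p.1 + w p.2 < 0

/-- The Coxeter length of `w ∈ 𝔅ₙ`: `ℓ(w) = #Inv(w) + #Nega(w) + #Nsp(w)`. -/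
noncomputable def blen (n : ℕ) (w : Equiv.Perm ℤ) : ℕ :=
  (InvSet n w).card + (NegaSet n w).card + (NspSet n w).card

/-- The left weak order on `𝔅ₙ`: `u ≤ v` iff `ℓ(v) = ℓ(u) + ℓ(v * u⁻¹)`. -/
def wle (n : ℕ) (u v : Equiv.Perm ℤ) : Prop :=
  blen n v = blen n u + blen n (v * u⁻¹)

/-- The Coxeter generators of `𝔅ₙ`: `s₀ = (1,-1)` and `sᵢ = (i,i+1)(-i,-(i+1))` for `i ≥ 1`. -/
def sB (i : ℕ) : Equiv.Perm ℤ :=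
  if i = 0 then Equiv.swap 1 (-1)
  else Equiv.swap (i : ℤ) ((i : ℤ) + 1) * Equiv.swap (-(i : ℤ)) (-((i : ℤ) + 1))

/-- `a[p] = a + p` if `a > 0`, `a - p` if `a < 0` (and `0 ↦ 0`). -/
def shiftFun (p : ℕ) (b : ℤ) : ℤ :=
  if 0 < b then b + (p : ℤ) else if b < 0 then b - (p : ℤ) else 0

/-- `w` is the shifted product `u × v ∈ 𝔅_{p+q}` of `u ∈ 𝔅_p` and `v ∈ 𝔅_q`:
its one-line notation is `(u₁, …, u_p, v₁[p], …, v_q[p])`. -/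
def IsSProd (p q : ℕ) (u v w : Equiv.Perm ℤ) : Prop :=
  w ∈ SignedPerm (p + q) ∧
  (∀ a : ℤ, 1 ≤ a → a ≤ (p : ℤ) → w a = u a) ∧
  (∀ a : ℤ, (p : ℤ) < a → a ≤ (p : ℤ) + (q : ℤ) → w a = shiftFun p (v (a - (p : ℤ))))

/-- `ξ` is a `(p,q)`-shuffle: an element of `𝔅_{p+q}` with positive entries (a permutation)
that is increasing on each of the blocks `[1,p]` and `[p+1,p+q]`. -/
def IsShuffle (p q : ℕ) (ξ : Equiv.Perm ℤ) : Prop :=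
  ξ ∈ SignedPerm (p + q) ∧
  (∀ a : ℤ, 1 ≤ a → a ≤ (p : ℤ) + (q : ℤ) → 0 < ξ a) ∧
  (∀ a b : ℤ, 1 ≤ a → a < b → b ≤ (p : ℤ) → ξ a < ξ b) ∧
  (∀ a b : ℤ, (p : ℤ) < a → a < b → b ≤ (p : ℤ) + (q : ℤ) → ξ a < ξ b)

/-- `w` is the standard signed permutation `sts(a₁ ⋯ a_m)` of the word `a₁ ⋯ a_m = a 1, …, a m`
(of nonzero integers): the unique `w ∈ 𝔅_m` with the same negative index set and
`|w_i| < |w_j| ↔ |a_i| ≤ |a_j|` for `1 ≤ i < j ≤ m`. -/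
def IsSts (m : ℕ) (a : ℤ → ℤ) (w : Equiv.Perm ℤ) : Prop :=
  w ∈ SignedPerm m ∧
  (∀ i : ℤ, 1 ≤ i → i ≤ (m : ℤ) → (w i < 0 ↔ a i < 0)) ∧
  (∀ i j : ℤ, 1 ≤ i → i < j → j ≤ (m : ℤ) → (|w i| < |w j| ↔ |a i| ≤ |a j|))

/-- The standard signed permutation of a word, as a function. -/
noncomputable def sts (m : ℕ) (a : ℤ → ℤ) : Equiv.Perm ℤ :=
  if h : ∃ w, IsSts m a w then h.choose else 1

/-- Descent set of `w ∈ 𝔅ₙ`: `Des(w) = {i ∈ [0,n-1] : w_i > w_{i+1}}` with `w₀ = 0`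
(note `w 0 = 0` holds automatically). -/
def DesSet (n : ℕ) (w : Equiv.Perm ℤ) : Finset ℕ :=
  (Finset.range n).filter fun i => w ((i : ℤ) + 1) < w (i : ℤ)

/-- Global descent set of `u ∈ 𝔅ₙ`. -/
noncomputable def GDesSet (n : ℕ) (u : Equiv.Perm ℤ) : Finset ℕ :=
  (Finset.Ico 1 n).filter fun i =>
    ∀ j k : ℤ, 1 ≤ j → j ≤ (i : ℤ) → (i : ℤ) < k → k ≤ (n : ℤ) → u k < u j

/-- `m` is the meet (greatest lower bound) of `x` and `y` within `S`, w.r.t. the weak order. -/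
def IsMeetIn (n : ℕ) (S : Set (Equiv.Perm ℤ)) (x y m : Equiv.Perm ℤ) : Prop :=
  m ∈ S ∧ wle n m x ∧ wle n m y ∧ ∀ z ∈ S, wle n z x → wle n z y → wle n z m

/-- `j` is the join (least upper bound) of `x` and `y` within `S`, w.r.t. the weak order. -/
def IsJoinIn (n : ℕ) (S : Set (Equiv.Perm ℤ)) (x y j : Equiv.Perm ℤ) : Prop :=
  j ∈ S ∧ wle n x j ∧ wle n y j ∧ ∀ z ∈ S, wle n x z → wle n y z → wle n j z

/-- The set `𝔅_p × 𝔅_{q,K} ⊆ 𝔅_{p+q}` of shifted products `u × v` with `u ∈ 𝔅_p`,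
`v ∈ 𝔅_q`, `Nega(v) = K`. -/
def SProdComp (p q : ℕ) (K : Finset ℤ) : Set (Equiv.Perm ℤ) :=
  {w | ∃ u v : Equiv.Perm ℤ, u ∈ SignedPerm p ∧ v ∈ SignedPerm q ∧ NegaSet q v = K ∧
        IsSProd p q u v w}

/-- `w` is the iterated shifted product `u⁽¹⁾ × ⋯ × u⁽ᵏ⁾` of the list `us` of signed
permutations with block sizes given by the list `ps`. -/
def IsMultiSProd (ps : List ℕ) (us : List (Equiv.Perm ℤ)) (w : Equiv.Perm ℤ) : Prop :=
  w ∈ SignedPerm ps.sum ∧ us.length = ps.length ∧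
  ∀ i < ps.length,
    us.getD i 1 ∈ SignedPerm (ps.getD i 0) ∧
    ∀ a : ℤ, ((ps.take i).sum : ℤ) < a → a ≤ ((ps.take i).sum : ℤ) + (ps.getD i 0 : ℤ) →
      w a = shiftFun ((ps.take i).sum) ((us.getD i 1) (a - ((ps.take i).sum : ℤ)))

/-- The subset `𝔅_{p₁} × 𝔅_{p₂} × ⋯ × 𝔅_{p_k}` of `𝔅_{p₁+⋯+p_k}`. -/
def MultiProdSet (ps : List ℕ) : Set (Equiv.Perm ℤ) :=
  {w | ∃ us, IsMultiSProd ps us w}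

/-- The `(L₂,…,L_k)`-component `𝔅_{p₁} × 𝔅_{p₂,L₂} × ⋯ × 𝔅_{p_k,L_k}`, where
`Ls.getD (i-1) ∅` is the prescribed negative index set of the `(i+1)`-st factor. -/
def ComponentSet (ps : List ℕ) (Ls : List (Finset ℤ)) : Set (Equiv.Perm ℤ) :=
  {w | ∃ us, IsMultiSProd ps us w ∧
        ∀ i, 1 ≤ i → i < ps.length →
          NegaSet (ps.getD i 0) (us.getD i 1) = Ls.getD (i - 1) ∅}

/-- `ξ ∈ Sh(p₁,…,p_k)`: a permutation in `𝔅_{p₁+⋯+p_k}` (all entries positive)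
increasing on each consecutive block. -/
def IsMultiShuffle (ps : List ℕ) (ξ : Equiv.Perm ℤ) : Prop :=
  ξ ∈ SignedPerm ps.sum ∧
  (∀ a : ℤ, 1 ≤ a → a ≤ (ps.sum : ℤ) → 0 < ξ a) ∧
  ∀ i < ps.length, ∀ a b : ℤ,
    ((ps.take i).sum : ℤ) < a → a < b → b ≤ ((ps.take i).sum : ℤ) + (ps.getD i 0 : ℤ) →
      ξ a < ξ b

theorem Equiv.Perm.apply_inv_self {α : Type*} (f : Equiv.Perm α) (x : α) : f (f⁻¹ x) = x :=
  Equiv.apply_symm_apply f x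

theorem Equiv.Perm.inv_apply_self {α : Type*} (f : Equiv.Perm α) (x : α) : f⁻¹ (f x) = x :=
  Equiv.symm_apply_apply f x

namespace SIA
open Equiv

lemma absCast (a : ℤ) : |a| = (a.natAbs : ℤ) := Int.abs_eq_natAbs a

/-- negativity of the "root" `e_b - e_a` -/
def bNeg (a b : ℤ) : Prop := if |a| < |b| then b < 0 else 0 < a

lemma bNeg_iff (a b : ℤ) : bNeg a b ↔ ((|a| < |b| ∧ b < 0) ∨ (¬ |a| < |b| ∧ 0 < a)) := by
  unfold bNeg; split_ifs with h <;> simp [h]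

lemma bNeg_swap {a b : ℤ} (h : |a| ≠ |b|) : bNeg b a ↔ ¬ bNeg a b := by
  simp only [bNeg_iff, absCast] at *; omega

lemma bNeg_negneg {a b : ℤ} (h : |a| ≠ |b|) : bNeg (-a) (-b) ↔ ¬ bNeg a b := by
  simp only [bNeg_iff, abs_neg, absCast] at *; omega

lemma bNeg_zero_left {b : ℤ} (hb : b ≠ 0) : bNeg 0 b ↔ b < 0 := by
  simp only [bNeg_iff, abs_zero, absCast] at *; omega

lemma bNeg_lt {a b : ℤ} (ha : a ≠ 0) (hb : b ≠ 0) (h : |a| ≠ |b|) : bNeg a b ↔ b < a := by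
  simp only [bNeg_iff, absCast] at *; omega

lemma bNeg_nsp {a b : ℤ} (ha : a ≠ 0) (hb : b ≠ 0) (h : |a| ≠ |b|) :
    bNeg (-a) b ↔ a + b < 0 := by
  simp only [bNeg_iff, abs_neg, absCast] at *; omega

lemma bNeg_abs_lt {a b : ℤ} (ha : a ≠ 0) (h : |a| ≠ |b|)
    (he : bNeg a b ↔ bNeg (-a) b) : |a| < |b| := by
  simp only [bNeg_iff, abs_neg, absCast] at *; omega

noncomputable def Roots (n : ℕ) : Finset (ℤ × ℤ) :=
  ((Icc (-(n:ℤ)) (n:ℤ)) ×ˢ (Icc (1:ℤ) (n:ℤ))).filter fun r => |r.1| < r.2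

lemma mem_Roots {n : ℕ} {r : ℤ × ℤ} : r ∈ Roots n ↔ |r.1| < r.2 ∧ r.2 ≤ (n:ℤ) := by
  simp only [Roots, Finset.mem_filter, Finset.mem_product, Finset.mem_Icc, absCast]; omega

noncomputable def NS (n : ℕ) (w : Perm ℤ) : Finset (ℤ × ℤ) :=
  (Roots n).filter fun r => bNeg (w r.1) (w r.2)

lemma mem_NS {n : ℕ} {w : Perm ℤ} {r : ℤ × ℤ} :
    r ∈ NS n w ↔ (|r.1| < r.2 ∧ r.2 ≤ (n:ℤ)) ∧ bNeg (w r.1) (w r.2) := by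
  simp only [NS, Finset.mem_filter, mem_Roots]

section SP
variable {n : ℕ} {w : Perm ℤ}

lemma sp_neg (hw : w ∈ SignedPerm n) (i : ℤ) : w (-i) = - w i := hw.1 i

lemma sp_zero (hw : w ∈ SignedPerm n) : w 0 = 0 := by
  have h := hw.1 0; rw [neg_zero] at h; omega

lemma sp_abs_le (hw : w ∈ SignedPerm n) {i : ℤ} (h : |i| ≤ (n:ℤ)) : |w i| ≤ (n:ℤ) := by
  by_contra hc
  push_neg at hc
  have h2 := hw.2 (w i) hc
  have h3 := w.injective h2
  rw [h3] at hc; omega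

lemma sp_ne_zero (hw : w ∈ SignedPerm n) {i : ℤ} (h : i ≠ 0) : w i ≠ 0 :=
  fun hc => h (w.injective (by rw [hc, sp_zero hw]))

lemma sp_abs_ne (hw : w ∈ SignedPerm n) {i j : ℤ} (h : |i| ≠ |j|) : |w i| ≠ |w j| := by
  intro hc
  rcases abs_eq_abs.1 hc with hc | hc
  · exact h (by rw [w.injective hc])
  · have h2 : w i = w (-j) := by rw [sp_neg hw, hc]
    have h3 := w.injective h2
    exact h (by rw [h3, abs_neg])

lemma sp_inv (hw : w ∈ SignedPerm n) : w⁻¹ ∈ SignedPerm n := by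
  constructor
  · intro i
    apply w.injective
    rw [Perm.apply_inv_self, sp_neg hw, Perm.apply_inv_self]
  · intro i hi
    apply w.injective
    rw [Perm.apply_inv_self]
    exact (hw.2 i hi).symm

lemma sp_mul {u v : Perm ℤ} (hu : u ∈ SignedPerm n) (hv : v ∈ SignedPerm n) :
    u * v ∈ SignedPerm n := by
  constructor
  · intro i; simp only [Perm.mul_apply, sp_neg hv, sp_neg hu]
  · intro i hi; simp only [Perm.mul_apply, hv.2 i hi, hu.2 i hi]

end SP
end SIA
namespace SIA
open Equiv
variable {n : ℕ} {w : Perm ℤ}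

lemma NS_filter_pos (hw : w ∈ SignedPerm n) :
    (NS n w).filter (fun r => 0 < r.1) = InvSet n w := by
  ext r
  simp only [Finset.mem_filter, mem_NS, InvSet, Finset.mem_product, Finset.mem_Icc]
  constructor
  · rintro ⟨⟨⟨h1, h2⟩, h3⟩, h4⟩
    have h1' := h1; rw [absCast] at h1'
    have hne : |r.1| ≠ |r.2| := by simp only [absCast]; omega
    have h5 := (bNeg_lt (sp_ne_zero hw (by omega)) (sp_ne_zero hw (by omega))
      (sp_abs_ne hw hne)).1 h3
    exact ⟨⟨⟨by omega, by omega⟩, by omega, h2⟩, by omega, h5⟩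
  · rintro ⟨⟨⟨h1, h2⟩, h3, h4⟩, h5, h6⟩
    have hne : |r.1| ≠ |r.2| := by simp only [absCast]; omega
    refine ⟨⟨⟨by simp only [absCast]; omega, h4⟩, ?_⟩, by omega⟩
    exact (bNeg_lt (sp_ne_zero hw (by omega)) (sp_ne_zero hw (by omega))
      (sp_abs_ne hw hne)).2 h6

lemma NS_filter_zero (hw : w ∈ SignedPerm n) :
    (NS n w).filter (fun r => r.1 = 0) = (NegaSet n w).image (fun j => ((0:ℤ), j)) := by
  ext r
  simp only [Finset.mem_filter, mem_NS, NegaSet, Finset.mem_image, Finset.mem_Icc]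
  constructor
  · rintro ⟨⟨⟨h1, h2⟩, h3⟩, h4⟩
    have h1' := h1; rw [h4] at h1'; simp only [abs_zero] at h1'
    have h5 : w r.2 < 0 := by
      have := h3; rw [h4, sp_zero hw] at this
      exact (bNeg_zero_left (sp_ne_zero hw (by omega))).1 this
    exact ⟨r.2, ⟨⟨by omega, h2⟩, h5⟩, by rw [← h4]⟩
  · rintro ⟨j, ⟨⟨h1, h2⟩, h3⟩, h4⟩
    have hr1 : r.1 = 0 := by rw [← h4]
    have hr2 : r.2 = j := by rw [← h4]
    subst hr2
    refine ⟨⟨⟨by rw [hr1, abs_zero]; omega, h2⟩, ?_⟩, hr1⟩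
    rw [hr1, sp_zero hw]
    exact (bNeg_zero_left (sp_ne_zero hw (by omega))).2 h3

lemma NS_filter_neg (hw : w ∈ SignedPerm n) :
    (NS n w).filter (fun r => r.1 < 0) = (NspSet n w).image (fun s => (-s.1, s.2)) := by
  ext r
  simp only [Finset.mem_filter, mem_NS, NspSet, Finset.mem_image, Finset.mem_product,
    Finset.mem_Icc]
  constructor
  · rintro ⟨⟨⟨h1, h2⟩, h3⟩, h4⟩
    have h1' := h1; rw [absCast] at h1'
    have hne : |(-r.1)| ≠ |r.2| := by simp only [abs_neg, absCast]; omega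
    have hwodd : w r.1 = - w (-r.1) := by
      have := sp_neg hw (-r.1); rw [neg_neg] at this; omega
    have h5 : w (-r.1) + w r.2 < 0 := by
      refine (bNeg_nsp (sp_ne_zero hw (by omega)) (sp_ne_zero hw (by omega))
        (sp_abs_ne hw hne)).1 ?_
      rw [← hwodd]; exact h3
    exact ⟨(-r.1, r.2), ⟨⟨⟨by omega, by omega⟩, by omega, h2⟩, by omega, h5⟩, by simp⟩
  · rintro ⟨s, ⟨⟨⟨h1, h2⟩, h3, h4⟩, h5, h6⟩, h7⟩
    have hr1 : r.1 = -s.1 := by rw [← h7]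
    have hr2 : r.2 = s.2 := by rw [← h7]
    have hne : |s.1| ≠ |s.2| := by simp only [absCast]; omega
    refine ⟨⟨⟨?_, by omega⟩, ?_⟩, by omega⟩
    · rw [hr1, hr2, abs_neg]; simp only [absCast]; omega
    · rw [hr1, hr2, sp_neg hw]
      exact (bNeg_nsp (sp_ne_zero hw (by omega)) (sp_ne_zero hw (by omega))
        (sp_abs_ne hw hne)).2 h6

lemma blen_eq (hw : w ∈ SignedPerm n) : blen n w = (NS n w).card := by
  have h1 := Finset.card_filter_add_card_filter_not
    (s := NS n w) (p := fun r : ℤ × ℤ => 0 < r.1)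
  have h2 := Finset.card_filter_add_card_filter_not
    (s := (NS n w).filter (fun r : ℤ × ℤ => ¬ 0 < r.1)) (p := fun r : ℤ × ℤ => r.1 = 0)
  have e1 : ((NS n w).filter (fun r : ℤ × ℤ => ¬ 0 < r.1)).filter (fun r : ℤ × ℤ => r.1 = 0)
      = (NS n w).filter (fun r => r.1 = 0) := by
    ext r; simp only [Finset.mem_filter]
    constructor
    · rintro ⟨⟨h, _⟩, h2⟩; exact ⟨h, h2⟩
    · rintro ⟨h, h2⟩; exact ⟨⟨h, by omega⟩, h2⟩
  have e2 : ((NS n w).filter (fun r : ℤ × ℤ => ¬ 0 < r.1)).filter (fun r : ℤ × ℤ => ¬ r.1 = 0)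
      = (NS n w).filter (fun r => r.1 < 0) := by
    ext r; simp only [Finset.mem_filter]
    constructor
    · rintro ⟨⟨h, ha⟩, hb⟩; exact ⟨h, by omega⟩
    · rintro ⟨h, h2⟩; exact ⟨⟨h, by omega⟩, by omega⟩
  rw [e1, e2] at h2
  have c1 : ((NS n w).filter (fun r : ℤ × ℤ => 0 < r.1)).card = (InvSet n w).card := by
    rw [NS_filter_pos hw]
  have c2 : ((NS n w).filter (fun r : ℤ × ℤ => r.1 = 0)).card = (NegaSet n w).card := by
    rw [NS_filter_zero hw]
    exact Finset.card_image_of_injective _ (fun a b h => by simpa using h)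
  have c3 : ((NS n w).filter (fun r : ℤ × ℤ => r.1 < 0)).card = (NspSet n w).card := by
    rw [NS_filter_neg hw]
    refine Finset.card_image_of_injective _ (fun a b h => ?_)
    simp only [Prod.mk.injEq, neg_inj] at h
    exact Prod.ext h.1 h.2
  unfold blen
  omega

end SIA
namespace SIA
open Equiv

/-- normal form of the root `e_d - e_c` (or of its negative, if it is negative) -/
def nf (c d : ℤ) : ℤ × ℤ :=
  if |c| < |d| then (if 0 < d then (c, d) else (-c, -d))
  else (if 0 < c then (d, c) else (-d, -c))

lemma nf_cases' (c d : ℤ) :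
    (nf c d = (c, d) ∧ |c| < |d| ∧ 0 < d) ∨
    (nf c d = (-c, -d) ∧ |c| < |d| ∧ d ≤ 0) ∨
    (nf c d = (d, c) ∧ |d| ≤ |c| ∧ 0 < c) ∨
    (nf c d = (-d, -c) ∧ |d| ≤ |c| ∧ c ≤ 0) := by
  unfold nf
  split_ifs with h1 h2 h2
  · exact Or.inl ⟨rfl, h1, h2⟩
  · exact Or.inr (Or.inl ⟨rfl, h1, by omega⟩)
  · exact Or.inr (Or.inr (Or.inl ⟨rfl, by omega, h2⟩))
  · exact Or.inr (Or.inr (Or.inr ⟨rfl, by omega, by omega⟩))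

lemma nf_norm {c d : ℤ} (h : |c| < d) : nf c d = (c, d) := by
  have hd : 0 < d := lt_of_le_of_lt (abs_nonneg c) h
  unfold nf
  rw [if_pos (by rw [abs_of_pos hd]; exact h), if_pos hd]

lemma nf_rep2 {c d : ℤ} (h : |c| < d) : nf (-d) (-c) = (c, d) := by
  have hd : 0 < d := lt_of_le_of_lt (abs_nonneg c) h
  unfold nf
  rw [if_neg (by simp only [abs_neg, absCast] at *; omega),
    if_neg (by omega), neg_neg, neg_neg]

lemma nf_rep3 {c d : ℤ} (h : |c| < d) : nf d c = (c, d) := by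
  have hd : 0 < d := lt_of_le_of_lt (abs_nonneg c) h
  unfold nf
  rw [if_neg (by simp only [absCast] at *; omega), if_pos hd]

lemma nf_rep4 {c d : ℤ} (h : |c| < d) : nf (-c) (-d) = (c, d) := by
  have hd : 0 < d := lt_of_le_of_lt (abs_nonneg c) h
  unfold nf
  rw [if_pos (by simp only [abs_neg, absCast] at *; omega),
    if_neg (by omega), neg_neg, neg_neg]

lemma sp_abs_eq {n : ℕ} {w : Perm ℤ} (hw : w ∈ SignedPerm n) {i j : ℤ} (h : |i| = |j|) :
    |w i| = |w j| := by
  rcases abs_eq_abs.1 h with h | h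
  · rw [h]
  · rw [h, sp_neg hw, abs_neg]

lemma card_NS_conj {n : ℕ} {u σ : Perm ℤ} (hu : u ∈ SignedPerm n) (hσ : σ ∈ SignedPerm n) :
    (NS n σ).card
      = ((Roots n).filter fun r =>
          ¬ (bNeg (u r.1) (u r.2) ↔ bNeg (σ (u r.1)) (σ (u r.2)))).card := by
  have hiu := sp_inv hu
  refine Finset.card_bij' (fun r _ => nf (u⁻¹ r.1) (u⁻¹ r.2))
    (fun s _ => if bNeg (u s.1) (u s.2) then nf (u s.2) (u s.1) else nf (u s.1) (u s.2))
    ?_ ?_ ?_ ?_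
  · -- hi : maps into the filter set
    intro r hr
    rw [mem_NS] at hr
    obtain ⟨⟨ha1, ha2⟩, hneg⟩ := hr
    have hr2pos : 0 < r.2 := lt_of_le_of_lt (abs_nonneg _) ha1
    have hner : |r.1| ≠ |r.2| := by simp only [absCast] at ha1 ⊢; omega
    have hposr : ¬ bNeg r.1 r.2 := by simp only [bNeg_iff, absCast] at ha1 ⊢; omega
    have hnegσ : |σ r.1| ≠ |σ r.2| := sp_abs_ne hσ hner
    have hui : u (u⁻¹ r.1) = r.1 := Perm.apply_inv_self u r.1
    have huj : u (u⁻¹ r.2) = r.2 := Perm.apply_inv_self u r.2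
    have huni : u (-(u⁻¹ r.1)) = -r.1 := by rw [sp_neg hu, hui]
    have hunj : u (-(u⁻¹ r.2)) = -r.2 := by rw [sp_neg hu, huj]
    have hin : |u⁻¹ r.1| ≤ (n:ℤ) := sp_abs_le hiu (by omega)
    have hjn : |u⁻¹ r.2| ≤ (n:ℤ) := sp_abs_le hiu (by rw [abs_of_pos hr2pos]; omega)
    have hije : |u⁻¹ r.1| ≠ |u⁻¹ r.2| := fun hc =>
      hner (by rw [← hui, ← huj]; exact sp_abs_eq hu hc)
    rcases nf_cases' (u⁻¹ r.1) (u⁻¹ r.2) with ⟨he, hc1, hc2⟩ | ⟨he, hc1, hc2⟩ |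
      ⟨he, hc1, hc2⟩ | ⟨he, hc1, hc2⟩ <;>
      rw [he, Finset.mem_filter, mem_Roots] <;> dsimp only <;>
      refine ⟨⟨?_, ?_⟩, ?_⟩
    · simp only [bNeg_iff, abs_neg, absCast] at *; omega
    · simp only [bNeg_iff, abs_neg, absCast] at *; omega
    · rw [hui, huj]; tauto
    · simp only [bNeg_iff, abs_neg, absCast] at *; omega
    · simp only [bNeg_iff, abs_neg, absCast] at *; omega
    · rw [huni, hunj]
      simp only [sp_neg hσ, bNeg_negneg hner, bNeg_negneg hnegσ]
      tauto
    · simp only [bNeg_iff, abs_neg, absCast] at *; omega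
    · simp only [bNeg_iff, abs_neg, absCast] at *; omega
    · rw [huj, hui]
      simp only [bNeg_swap hner, bNeg_swap hnegσ]
      tauto
    · simp only [bNeg_iff, abs_neg, absCast] at *; omega
    · simp only [bNeg_iff, abs_neg, absCast] at *; omega
    · rw [hunj, huni]
      simp only [sp_neg hσ, bNeg_negneg hner.symm, bNeg_negneg hnegσ.symm,
        bNeg_swap hner, bNeg_swap hnegσ]
      tauto
  · -- hj : inverse maps into NS n σ
    intro s hs
    rw [Finset.mem_filter, mem_Roots] at hs
    obtain ⟨⟨hs1, hs2⟩, hT⟩ := hs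
    have hs2pos : 0 < s.2 := lt_of_le_of_lt (abs_nonneg _) hs1
    have hnes : |s.1| ≠ |s.2| := by simp only [absCast] at hs1 ⊢; omega
    have hne : |u s.1| ≠ |u s.2| := sp_abs_ne hu hnes
    have hneσ : |σ (u s.1)| ≠ |σ (u s.2)| := sp_abs_ne hσ hne
    have hbn : u s.2 ≠ 0 := sp_ne_zero hu (by omega)
    have han : |u s.1| ≤ (n:ℤ) := sp_abs_le hu (by omega)
    have hbn' : |u s.2| ≤ (n:ℤ) := sp_abs_le hu (by rw [abs_of_pos hs2pos]; omega)
    by_cases hA : bNeg (u s.1) (u s.2)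
    · have hB : ¬ bNeg (σ (u s.1)) (σ (u s.2)) := by tauto
      rw [if_pos hA]
      rcases nf_cases' (u s.2) (u s.1) with ⟨he, hc1, hc2⟩ | ⟨he, hc1, hc2⟩ |
        ⟨he, hc1, hc2⟩ | ⟨he, hc1, hc2⟩ <;> rw [he, mem_NS] <;> dsimp only
      · refine ⟨⟨?_, ?_⟩, ?_⟩
        · simp only [bNeg_iff, abs_neg, absCast] at *; omega
        · simp only [bNeg_iff, abs_neg, absCast] at *; omega
        · rw [bNeg_swap hneσ]; exact hB
      · exfalso; simp only [bNeg_iff, abs_neg, absCast] at *; omega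
      · exfalso; simp only [bNeg_iff, abs_neg, absCast] at *; omega
      · refine ⟨⟨?_, ?_⟩, ?_⟩
        · simp only [bNeg_iff, abs_neg, absCast] at *; omega
        · simp only [bNeg_iff, abs_neg, absCast] at *; omega
        · rw [sp_neg hσ, sp_neg hσ, bNeg_negneg hneσ]
          exact hB
    · have hB : bNeg (σ (u s.1)) (σ (u s.2)) := by tauto
      rw [if_neg hA]
      rcases nf_cases' (u s.1) (u s.2) with ⟨he, hc1, hc2⟩ | ⟨he, hc1, hc2⟩ |
        ⟨he, hc1, hc2⟩ | ⟨he, hc1, hc2⟩ <;> rw [he, mem_NS] <;> dsimp only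
      · refine ⟨⟨?_, ?_⟩, ?_⟩
        · simp only [bNeg_iff, abs_neg, absCast] at *; omega
        · simp only [bNeg_iff, abs_neg, absCast] at *; omega
        · exact hB
      · exfalso
        have hbz : u s.2 ≠ 0 := hbn
        simp only [bNeg_iff, abs_neg, absCast] at *; omega
      · exfalso; simp only [bNeg_iff, abs_neg, absCast] at *; omega
      · refine ⟨⟨?_, ?_⟩, ?_⟩
        · simp only [bNeg_iff, abs_neg, absCast] at *; omega
        · simp only [bNeg_iff, abs_neg, absCast] at *; omega
        · rw [sp_neg hσ, sp_neg hσ]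
          simp only [bNeg_negneg hneσ.symm, bNeg_swap hneσ, not_not]
          exact hB
  · -- left inverse
    intro r hr
    rw [mem_NS] at hr
    obtain ⟨⟨ha1, ha2⟩, hneg⟩ := hr
    have hr2pos : 0 < r.2 := lt_of_le_of_lt (abs_nonneg _) ha1
    have hner : |r.1| ≠ |r.2| := by simp only [absCast] at ha1 ⊢; omega
    have hposr : ¬ bNeg r.1 r.2 := by simp only [bNeg_iff, absCast] at ha1 ⊢; omega
    have hui : u (u⁻¹ r.1) = r.1 := Perm.apply_inv_self u r.1
    have huj : u (u⁻¹ r.2) = r.2 := Perm.apply_inv_self u r.2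
    have huni : u (-(u⁻¹ r.1)) = -r.1 := by rw [sp_neg hu, hui]
    have hunj : u (-(u⁻¹ r.2)) = -r.2 := by rw [sp_neg hu, huj]
    rcases nf_cases' (u⁻¹ r.1) (u⁻¹ r.2) with ⟨he, hc1, hc2⟩ | ⟨he, hc1, hc2⟩ |
      ⟨he, hc1, hc2⟩ | ⟨he, hc1, hc2⟩ <;> rw [he] <;> dsimp only
    · rw [hui, huj, if_neg hposr, nf_norm ha1]
    · rw [huni, hunj, if_pos ((bNeg_negneg hner).2 hposr), nf_rep2 ha1]
    · rw [huj, hui, if_pos ((bNeg_swap hner).2 hposr), nf_norm ha1]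
    · rw [hunj, huni,
        if_neg (by simp only [bNeg_negneg hner.symm, bNeg_swap hner, not_not]; exact hposr),
        nf_rep2 ha1]
  · -- right inverse
    intro s hs
    rw [Finset.mem_filter, mem_Roots] at hs
    obtain ⟨⟨hs1, hs2⟩, hT⟩ := hs
    have hs2pos : 0 < s.2 := lt_of_le_of_lt (abs_nonneg _) hs1
    have hnes : |s.1| ≠ |s.2| := by simp only [absCast] at hs1 ⊢; omega
    have hbn : u s.2 ≠ 0 := sp_ne_zero hu (by omega)
    have hinv1 : u⁻¹ (u s.1) = s.1 := Perm.inv_apply_self u s.1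
    have hinv2 : u⁻¹ (u s.2) = s.2 := Perm.inv_apply_self u s.2
    have hinvn1 : u⁻¹ (-(u s.1)) = -s.1 := by rw [sp_neg hiu, hinv1]
    have hinvn2 : u⁻¹ (-(u s.2)) = -s.2 := by rw [sp_neg hiu, hinv2]
    by_cases hA : bNeg (u s.1) (u s.2)
    · rw [if_pos hA]
      rcases nf_cases' (u s.2) (u s.1) with ⟨he, hc1, hc2⟩ | ⟨he, hc1, hc2⟩ |
        ⟨he, hc1, hc2⟩ | ⟨he, hc1, hc2⟩ <;> rw [he] <;> dsimp only
      · rw [hinv2, hinv1, nf_rep3 hs1]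
      · exfalso
        have hne : |u s.1| ≠ |u s.2| := sp_abs_ne hu hnes
        simp only [bNeg_iff, absCast] at hA hc1 hne; omega
      · exfalso
        have hne : |u s.1| ≠ |u s.2| := sp_abs_ne hu hnes
        simp only [bNeg_iff, absCast] at hA hc1 hne; omega
      · rw [hinvn1, hinvn2, nf_rep4 hs1]
    · rw [if_neg hA]
      rcases nf_cases' (u s.1) (u s.2) with ⟨he, hc1, hc2⟩ | ⟨he, hc1, hc2⟩ |
        ⟨he, hc1, hc2⟩ | ⟨he, hc1, hc2⟩ <;> rw [he] <;> dsimp only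
      · rw [hinv1, hinv2, nf_norm hs1]
      · exfalso
        have hbz : u s.2 ≠ 0 := hbn
        simp only [bNeg_iff, absCast] at hA hc1 hbz; omega
      · exfalso
        have hne : |u s.1| ≠ |u s.2| := sp_abs_ne hu hnes
        simp only [bNeg_iff, absCast] at hA hc1 hne; omega
      · rw [hinvn2, hinvn1, nf_rep2 hs1]

lemma wle_char {n : ℕ} {u v : Perm ℤ} (hu : u ∈ SignedPerm n) (hv : v ∈ SignedPerm n) :
    wle n u v ↔ NS n u ⊆ NS n v := by
  have hσ : v * u⁻¹ ∈ SignedPerm n := sp_mul hv (sp_inv hu)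
  have hvi : ∀ z : ℤ, (v * u⁻¹) (u z) = v z := fun z => by
    simp [Perm.mul_apply]
  have hconj := card_NS_conj hu hσ
  have econg : ((Roots n).filter fun r =>
        ¬ (bNeg (u r.1) (u r.2) ↔ bNeg ((v * u⁻¹) (u r.1)) ((v * u⁻¹) (u r.2)))) =
      ((Roots n).filter fun r =>
        ¬ (bNeg (u r.1) (u r.2) ↔ bNeg (v r.1) (v r.2))) := by
    apply Finset.filter_congr
    intro r _
    rw [hvi, hvi]
  rw [econg] at hconj
  -- split T into X and Z
  set T := ((Roots n).filter fun r =>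
      ¬ (bNeg (u r.1) (u r.2) ↔ bNeg (v r.1) (v r.2))) with hTdef
  set X := ((Roots n).filter fun r =>
      ¬ bNeg (u r.1) (u r.2) ∧ bNeg (v r.1) (v r.2)) with hXdef
  set Z := ((Roots n).filter fun r =>
      bNeg (u r.1) (u r.2) ∧ ¬ bNeg (v r.1) (v r.2)) with hZdef
  set Y := ((Roots n).filter fun r =>
      bNeg (u r.1) (u r.2) ∧ bNeg (v r.1) (v r.2)) with hYdef
  have hTsplit : T.card = Z.card + X.card := by
    have h := Finset.card_filter_add_card_filter_not
      (s := T) (p := fun r : ℤ × ℤ => bNeg (u r.1) (u r.2))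
    have e1 : T.filter (fun r : ℤ × ℤ => bNeg (u r.1) (u r.2)) = Z := by
      rw [hTdef, hZdef, Finset.filter_filter]
      apply Finset.filter_congr; intro r _; tauto
    have e2 : T.filter (fun r : ℤ × ℤ => ¬ bNeg (u r.1) (u r.2)) = X := by
      rw [hTdef, hXdef, Finset.filter_filter]
      apply Finset.filter_congr; intro r _; tauto
    rw [e1, e2] at h
    omega
  have hNu : (NS n u).card = Y.card + Z.card := by
    have h := Finset.card_filter_add_card_filter_not
      (s := NS n u) (p := fun r : ℤ × ℤ => bNeg (v r.1) (v r.2))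
    have e1 : (NS n u).filter (fun r : ℤ × ℤ => bNeg (v r.1) (v r.2)) = Y := by
      rw [hYdef]; unfold NS; rw [Finset.filter_filter]
    have e2 : (NS n u).filter (fun r : ℤ × ℤ => ¬ bNeg (v r.1) (v r.2)) = Z := by
      rw [hZdef]; unfold NS; rw [Finset.filter_filter]
    rw [e1, e2] at h
    omega
  have hNv : (NS n v).card = Y.card + X.card := by
    have h := Finset.card_filter_add_card_filter_not
      (s := NS n v) (p := fun r : ℤ × ℤ => bNeg (u r.1) (u r.2))
    have e1 : (NS n v).filter (fun r : ℤ × ℤ => bNeg (u r.1) (u r.2)) = Y := by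
      rw [hYdef]; unfold NS; rw [Finset.filter_filter]
      apply Finset.filter_congr; intro r _; tauto
    have e2 : (NS n v).filter (fun r : ℤ × ℤ => ¬ bNeg (u r.1) (u r.2)) = X := by
      rw [hXdef]; unfold NS; rw [Finset.filter_filter]
      apply Finset.filter_congr; intro r _; tauto
    rw [e1, e2] at h
    omega
  unfold wle
  rw [blen_eq hv, blen_eq hu, blen_eq hσ, hconj]
  constructor
  · intro h
    have hZ : Z.card = 0 := by omega
    have hZe : Z = ∅ := Finset.card_eq_zero.1 hZ
    intro r hr
    rw [mem_NS] at hr ⊢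
    refine ⟨hr.1, ?_⟩
    by_contra hc
    have : r ∈ Z := by
      rw [hZdef, Finset.mem_filter, mem_Roots]
      exact ⟨hr.1, hr.2, hc⟩
    rw [hZe] at this
    exact absurd this (Finset.notMem_empty r)
  · intro h
    have hZe : Z = ∅ := by
      rw [Finset.eq_empty_iff_forall_notMem]
      intro r hrz
      rw [hZdef, Finset.mem_filter, mem_Roots] at hrz
      obtain ⟨hroot, hbu, hbv⟩ := hrz
      have : r ∈ NS n v := h (mem_NS.2 ⟨hroot, hbu⟩)
      rw [mem_NS] at this
      exact hbv this.2
    have hZ : Z.card = 0 := by rw [hZe]; exact Finset.card_empty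
    omega

end SIA
namespace SIA
open Equiv

def unsh (p : ℕ) (a : ℤ) : ℤ := if 0 < a then a - p else if a < 0 then a + p else 0

lemma shift_abs {p : ℕ} {b : ℤ} (hb : b ≠ 0) : |shiftFun p b| = |b| + p := by
  unfold shiftFun; split_ifs <;> simp only [absCast] at * <;> omega

lemma shift_pos {p : ℕ} {b : ℤ} : 0 < shiftFun p b ↔ 0 < b := by
  unfold shiftFun; split_ifs <;> omega

lemma shift_neg' {p : ℕ} {b : ℤ} : shiftFun p b < 0 ↔ b < 0 := by
  unfold shiftFun; split_ifs <;> omega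

lemma shift_odd (p : ℕ) (b : ℤ) : shiftFun p (-b) = - shiftFun p b := by
  unfold shiftFun; split_ifs <;> omega

lemma shift_of_pos {p : ℕ} {b : ℤ} (hb : 0 < b) : shiftFun p b = b + p := by
  unfold shiftFun; rw [if_pos hb]

lemma unsh_shift {p : ℕ} {b : ℤ} (hb : b ≠ 0) : unsh p (shiftFun p b) = b := by
  unfold unsh shiftFun; split_ifs <;> omega

lemma shift_unsh {p : ℕ} {a : ℤ} (ha : (p:ℤ) < |a|) : shiftFun p (unsh p a) = a := by
  unfold unsh shiftFun; simp only [absCast] at ha; split_ifs <;> omega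

lemma unsh_abs {p : ℕ} {a : ℤ} (ha : (p:ℤ) < |a|) : |unsh p a| = |a| - p := by
  unfold unsh; simp only [absCast] at *; split_ifs <;> omega

lemma unsh_ne {p : ℕ} {a : ℤ} (ha : (p:ℤ) < |a|) : unsh p a ≠ 0 := by
  unfold unsh; simp only [absCast] at ha; split_ifs <;> omega

lemma unsh_odd (p : ℕ) (a : ℤ) : unsh p (-a) = - unsh p a := by
  unfold unsh; split_ifs <;> omega

lemma bNeg_shift {p : ℕ} {a b : ℤ} (ha : a ≠ 0) (hb : b ≠ 0) :
    bNeg (shiftFun p a) (shiftFun p b) ↔ bNeg a b := by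
  rw [bNeg_iff, bNeg_iff, shift_abs ha, shift_abs hb, shift_pos, shift_neg']
  constructor <;> (intro h; rcases h with ⟨h1, h2⟩ | ⟨h1, h2⟩)
  · exact Or.inl ⟨by omega, h2⟩
  · exact Or.inr ⟨by omega, h2⟩
  · exact Or.inl ⟨by omega, h2⟩
  · exact Or.inr ⟨by omega, h2⟩

section Sprod
variable {p q : ℕ} {x y w : Perm ℤ}

lemma sprod_low (hx : x ∈ SignedPerm p) (hw : IsSProd p q x y w) {a : ℤ}
    (ha : |a| ≤ (p:ℤ)) : w a = x a := by
  rcases lt_trichotomy a 0 with h | h | h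
  · have h1 : w (-a) = x (-a) := hw.2.1 (-a) (by omega) (by simp only [absCast] at ha; omega)
    have h2 : w (-a) = - w a := hw.1.1 a
    have h3 : x (-a) = - x a := hx.1 a
    omega
  · subst h; rw [sp_zero hw.1, sp_zero hx]
  · exact hw.2.1 a (by omega) (by simp only [absCast] at ha; omega)

lemma sprod_high (hy : y ∈ SignedPerm q) (hw : IsSProd p q x y w) {a : ℤ}
    (h1 : (p:ℤ) < |a|) (h2 : |a| ≤ (p:ℤ) + (q:ℤ)) :
    w a = shiftFun p (y (unsh p a)) := by
  rcases lt_trichotomy a 0 with h | h | h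
  · have e1 : w (-a) = shiftFun p (y (-a - p)) :=
      hw.2.2 (-a) (by simp only [absCast] at h1; omega) (by simp only [absCast] at h2; omega)
    have e2 : w (-a) = - w a := hw.1.1 a
    have e4 : -a - (p:ℤ) = -(a + p) := by ring
    have e3 : y (-(a + p)) = - y (a + p) := hy.1 (a + p)
    have e5 : unsh p a = a + p := by
      unfold unsh; simp only [absCast] at h1; split_ifs <;> omega
    have e6 := shift_odd p (y (a + p))
    rw [e5]
    rw [e4, e3, e6] at e1
    omega
  · exfalso; subst h; simp only [abs_zero] at h1; omega
  · have e5 : unsh p a = a - p := by unfold unsh; rw [if_pos h]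
    rw [e5]
    exact hw.2.2 a (by simp only [absCast] at h1; omega) (by simp only [absCast] at h2; omega)

lemma sprod_mid_iff (hx : x ∈ SignedPerm p) (hy : y ∈ SignedPerm q) (hw : IsSProd p q x y w)
    {i j : ℤ} (hi : |i| ≤ (p:ℤ)) (hj1 : (p:ℤ) < j) (hj2 : j ≤ (p:ℤ) + (q:ℤ)) :
    (bNeg (w i) (w j) ↔ y (j - p) < 0) := by
  have e1 : w i = x i := sprod_low hx hw hi
  have e2 : w j = shiftFun p (y (j - p)) := hw.2.2 j hj1 hj2
  have h3 : |x i| ≤ (p:ℤ) := sp_abs_le hx hi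
  have h4 : y (j - p) ≠ 0 := sp_ne_zero hy (by omega)
  have h5 : |shiftFun p (y (j - p))| = |y (j - p)| + p := shift_abs h4
  have h6 : shiftFun p (y (j - p)) < 0 ↔ y (j - p) < 0 := shift_neg'
  have h7 : (1:ℤ) ≤ |y (j - p)| := by simp only [absCast] at h4 ⊢; omega
  rw [e1, e2, bNeg_iff, h5]
  constructor
  · rintro (⟨h8, h9⟩ | ⟨h8, h9⟩)
    · exact h6.1 h9
    · exfalso; simp only [absCast] at h3 h7 h8; omega
  · intro h8
    exact Or.inl ⟨by simp only [absCast] at h3 h7 ⊢; omega, h6.2 h8⟩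

lemma sprod_high_iff (hy : y ∈ SignedPerm q) (hw : IsSProd p q x y w)
    {i j : ℤ} (hi : (p:ℤ) < |i|) (hij : |i| < j) (hj2 : j ≤ (p:ℤ) + (q:ℤ)) :
    (bNeg (w i) (w j) ↔ bNeg (y (unsh p i)) (y (j - p))) := by
  have hj1 : (p:ℤ) < j := lt_trans hi hij
  have e1 : w i = shiftFun p (y (unsh p i)) := sprod_high hy hw hi (by omega)
  have e2 : w j = shiftFun p (y (j - p)) := hw.2.2 j hj1 hj2
  have m1 : y (unsh p i) ≠ 0 := sp_ne_zero hy (unsh_ne hi)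
  have m2 : y (j - p) ≠ 0 := sp_ne_zero hy (by omega)
  rw [e1, e2, bNeg_shift m1 m2]

lemma sprod_mono {x' y' w' : Perm ℤ}
    (hx : x ∈ SignedPerm p) (hy : y ∈ SignedPerm q)
    (hx' : x' ∈ SignedPerm p) (hy' : y' ∈ SignedPerm q)
    (hw : IsSProd p q x y w) (hw' : IsSProd p q x' y' w')
    (m1 : NS p x ⊆ NS p x') (m2 : NS q y ⊆ NS q y') :
    NS (p+q) w ⊆ NS (p+q) w' := by
  intro r hr
  rw [mem_NS] at hr ⊢
  obtain ⟨⟨hr1, hr2⟩, hneg⟩ := hr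
  rw [Nat.cast_add] at hr2
  refine ⟨⟨hr1, by rw [Nat.cast_add]; exact hr2⟩, ?_⟩
  rcases le_or_gt r.2 (p:ℤ) with h | h
  · have hr1p : |r.1| ≤ (p:ℤ) := by omega
    have l1 : w r.1 = x r.1 := sprod_low hx hw hr1p
    have l2 : w r.2 = x r.2 := sprod_low hx hw (by rw [abs_of_pos (lt_of_le_of_lt (abs_nonneg _) hr1)]; omega)
    have l1' : w' r.1 = x' r.1 := sprod_low hx' hw' hr1p
    have l2' : w' r.2 = x' r.2 := sprod_low hx' hw'
      (by rw [abs_of_pos (lt_of_le_of_lt (abs_nonneg _) hr1)]; omega)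
    have hmem : r ∈ NS p x := mem_NS.2 ⟨⟨hr1, h⟩, by rw [← l1, ← l2]; exact hneg⟩
    have := m1 hmem
    rw [mem_NS] at this
    rw [l1', l2']
    exact this.2
  · rcases le_or_gt |r.1| (p:ℤ) with h1 | h1
    · have hyneg : y (r.2 - p) < 0 := (sprod_mid_iff hx hy hw h1 h hr2).1 hneg
      have hz : r.2 - (p:ℤ) ≠ 0 := by omega
      have hin : ((0:ℤ), r.2 - (p:ℤ)) ∈ NS q y := by
        rw [mem_NS]
        refine ⟨⟨by rw [abs_zero]; omega, by omega⟩, ?_⟩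
        rw [sp_zero hy]
        exact (bNeg_zero_left (sp_ne_zero hy hz)).2 hyneg
      have h2' := m2 hin
      rw [mem_NS] at h2'
      have h3' := h2'.2
      rw [sp_zero hy'] at h3'
      have hy'neg : y' (r.2 - p) < 0 := (bNeg_zero_left (sp_ne_zero hy' hz)).1 h3'
      exact (sprod_mid_iff hx' hy' hw' h1 h hr2).2 hy'neg
    · have hneg2 : bNeg (y (unsh p r.1)) (y (r.2 - p)) :=
        (sprod_high_iff hy hw h1 hr1 hr2).1 hneg
      have hroot : |unsh p r.1| < r.2 - p ∧ r.2 - p ≤ (q:ℤ) := by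
        rw [unsh_abs h1]; omega
      have hin : (unsh p r.1, r.2 - (p:ℤ)) ∈ NS q y :=
        mem_NS.2 ⟨hroot, hneg2⟩
      have h2' := m2 hin
      rw [mem_NS] at h2'
      exact (sprod_high_iff hy' hw' h1 hr1 hr2).2 h2'.2

end Sprod
end SIA
namespace SIA
open Equiv

/-- restriction of `w` to the low block, as a permutation -/
noncomputable def mkX (p : ℕ) (w : Perm ℤ)
    (H1 : ∀ i : ℤ, |i| ≤ (p:ℤ) → |w i| ≤ (p:ℤ))
    (H2 : ∀ i : ℤ, |i| ≤ (p:ℤ) → |w⁻¹ i| ≤ (p:ℤ)) : Perm ℤ where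
  toFun i := if |i| ≤ (p:ℤ) then w i else i
  invFun i := if |i| ≤ (p:ℤ) then w⁻¹ i else i
  left_inv i := by
    by_cases h : |i| ≤ (p:ℤ)
    · simp only [if_pos h, if_pos (H1 i h), Perm.inv_apply_self]
    · simp only [if_neg h]
  right_inv i := by
    by_cases h : |i| ≤ (p:ℤ)
    · simp only [if_pos h, if_pos (H2 i h), Perm.apply_inv_self]
    · simp only [if_neg h]

lemma mkX_apply (p : ℕ) (w : Perm ℤ) (H1 H2) (i : ℤ) :
    mkX p w H1 H2 i = if |i| ≤ (p:ℤ) then w i else i := rfl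

lemma mkX_sp {p : ℕ} {w : Perm ℤ} (H1 H2) (hodd : ∀ i : ℤ, w (-i) = - w i) :
    mkX p w H1 H2 ∈ SignedPerm p := by
  constructor
  · intro i
    rw [mkX_apply, mkX_apply, abs_neg]
    split_ifs with h
    · exact hodd i
    · rfl
  · intro i hi
    rw [mkX_apply, if_neg (by omega)]

/-- restriction of `w` to the high block, shifted down, as a permutation -/
noncomputable def mkY (p q : ℕ) (w : Perm ℤ)
    (H3 : ∀ a : ℤ, (p:ℤ) < |a| → |a| ≤ (p:ℤ) + (q:ℤ) → (p:ℤ) < |w a| ∧ |w a| ≤ (p:ℤ) + (q:ℤ))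
    (H4 : ∀ a : ℤ, (p:ℤ) < |a| → |a| ≤ (p:ℤ) + (q:ℤ) →
      (p:ℤ) < |w⁻¹ a| ∧ |w⁻¹ a| ≤ (p:ℤ) + (q:ℤ)) : Perm ℤ where
  toFun i := if 1 ≤ |i| ∧ |i| ≤ (q:ℤ) then unsh p (w (shiftFun p i)) else i
  invFun i := if 1 ≤ |i| ∧ |i| ≤ (q:ℤ) then unsh p (w⁻¹ (shiftFun p i)) else i
  left_inv i := by
    dsimp only
    by_cases h : 1 ≤ |i| ∧ |i| ≤ (q:ℤ)
    · have hi0 : i ≠ 0 := by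
        intro hc; rw [hc, abs_zero] at h; omega
      have hsh : (p:ℤ) < |shiftFun p i| ∧ |shiftFun p i| ≤ (p:ℤ) + (q:ℤ) := by
        rw [shift_abs hi0]; omega
      have hw1 := H3 _ hsh.1 hsh.2
      have hcond : 1 ≤ |unsh p (w (shiftFun p i))| ∧ |unsh p (w (shiftFun p i))| ≤ (q:ℤ) := by
        rw [unsh_abs hw1.1]; omega
      rw [if_pos h, if_pos hcond, shift_unsh hw1.1, Perm.inv_apply_self, unsh_shift hi0]
    · rw [if_neg h, if_neg h]
  right_inv i := by
    dsimp only
    by_cases h : 1 ≤ |i| ∧ |i| ≤ (q:ℤ)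
    · have hi0 : i ≠ 0 := by
        intro hc; rw [hc, abs_zero] at h; omega
      have hsh : (p:ℤ) < |shiftFun p i| ∧ |shiftFun p i| ≤ (p:ℤ) + (q:ℤ) := by
        rw [shift_abs hi0]; omega
      have hw1 := H4 _ hsh.1 hsh.2
      have hcond : 1 ≤ |unsh p (w⁻¹ (shiftFun p i))| ∧ |unsh p (w⁻¹ (shiftFun p i))| ≤ (q:ℤ) := by
        rw [unsh_abs hw1.1]; omega
      rw [if_pos h, if_pos hcond, shift_unsh hw1.1, Perm.apply_inv_self, unsh_shift hi0]
    · rw [if_neg h, if_neg h]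

lemma mkY_apply (p q : ℕ) (w : Perm ℤ) (H3 H4) (i : ℤ) :
    mkY p q w H3 H4 i = if 1 ≤ |i| ∧ |i| ≤ (q:ℤ) then unsh p (w (shiftFun p i)) else i := rfl

lemma mkY_sp {p q : ℕ} {w : Perm ℤ} (H3 H4) (hodd : ∀ i : ℤ, w (-i) = - w i) :
    mkY p q w H3 H4 ∈ SignedPerm q := by
  constructor
  · intro i
    rw [mkY_apply, mkY_apply, abs_neg]
    split_ifs with h
    · rw [shift_odd, hodd, unsh_odd]
    · rfl
  · intro i hi
    rw [mkY_apply, if_neg (by omega)]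

end SIA

open SIA

/-- If `u ≤ u'` in `𝔅_p` and `v ≤ v'` in `𝔅_{q,K}`, then
`{x × y : x ∈ [u,u'], y ∈ [v,v']} = [u × v, u' × v']` in `𝔅_{p+q}`. -/
theorem sprod_interval (p q : ℕ) (K : Finset ℤ) (u u' v v' uv uv' : Equiv.Perm ℤ)
    (hu : u ∈ SignedPerm p) (hu' : u' ∈ SignedPerm p) (huu' : wle p u u')
    (hv : v ∈ SignedPerm q) (hv' : v' ∈ SignedPerm q)
    (hvK : NegaSet q v = K) (hv'K : NegaSet q v' = K) (hvv' : wle q v v')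
    (huv : IsSProd p q u v uv) (huv' : IsSProd p q u' v' uv') :
    {w | ∃ x y : Equiv.Perm ℤ, x ∈ SignedPerm p ∧ wle p u x ∧ wle p x u' ∧
          y ∈ SignedPerm q ∧ wle q v y ∧ wle q y v' ∧ IsSProd p q x y w}
      = {w | w ∈ SignedPerm (p + q) ∧ wle (p + q) uv w ∧ wle (p + q) w uv'} := by
  ext w
  simp only [Set.mem_setOf_eq]
  constructor
  · rintro ⟨x, y, hxsp, hux, hxu', hysp, hvy, hyv', hsprod⟩
    refine ⟨hsprod.1, ?_, ?_⟩
    · rw [wle_char huv.1 hsprod.1]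
      exact sprod_mono hu hv hxsp hysp huv hsprod
        ((wle_char hu hxsp).1 hux) ((wle_char hv hysp).1 hvy)
    · rw [wle_char hsprod.1 huv'.1]
      exact sprod_mono hxsp hysp hu' hv' hsprod huv'
        ((wle_char hxsp hu').1 hxu') ((wle_char hysp hv').1 hyv')
  · rintro ⟨hwsp, hw1, hw2⟩
    rw [wle_char huv.1 hwsp] at hw1
    rw [wle_char hwsp huv'.1] at hw2
    -- K characterizations
    have hKv : ∀ j : ℤ, 1 ≤ j → j ≤ (q:ℤ) → (v j < 0 ↔ j ∈ K) := by
      intro j h1 h2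
      rw [← hvK]
      simp only [NegaSet, Finset.mem_filter, Finset.mem_Icc]
      exact ⟨fun h => ⟨⟨h1, h2⟩, h⟩, fun h => h.2⟩
    have hKv' : ∀ j : ℤ, 1 ≤ j → j ≤ (q:ℤ) → (v' j < 0 ↔ j ∈ K) := by
      intro j h1 h2
      rw [← hv'K]
      simp only [NegaSet, Finset.mem_filter, Finset.mem_Icc]
      exact ⟨fun h => ⟨⟨h1, h2⟩, h⟩, fun h => h.2⟩
    -- mid squeeze
    have hmidw : ∀ i j : ℤ, |i| ≤ (p:ℤ) → (p:ℤ) < j → j ≤ (p:ℤ) + (q:ℤ) →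
        (bNeg (w i) (w j) ↔ (j - p) ∈ K) := by
      intro i j hi hj1 hj2
      have hroot : |((i, j) : ℤ × ℤ).1| < ((i, j) : ℤ × ℤ).2 ∧
          ((i, j) : ℤ × ℤ).2 ≤ ((p + q : ℕ) : ℤ) := by
        constructor
        · dsimp only; omega
        · dsimp only; push_cast; omega
      have e1 := sprod_mid_iff hu hv huv hi hj1 hj2
      have e2 := sprod_mid_iff hu' hv' huv' hi hj1 hj2
      constructor
      · intro hb
        have hmem : ((i, j) : ℤ × ℤ) ∈ NS (p+q) w := mem_NS.2 ⟨hroot, hb⟩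
        have h3 := hw2 hmem
        rw [mem_NS] at h3
        exact (hKv' _ (by omega) (by omega)).1 (e2.1 h3.2)
      · intro hk
        have hb : bNeg (uv i) (uv j) := e1.2 ((hKv _ (by omega) (by omega)).2 hk)
        have hmem : ((i, j) : ℤ × ℤ) ∈ NS (p+q) uv := mem_NS.2 ⟨hroot, hb⟩
        have h3 := hw1 hmem
        rw [mem_NS] at h3
        exact h3.2
    -- key: low-block values are abs-smaller than high-block values
    have hkey : ∀ i j : ℤ, 1 ≤ |i| → |i| ≤ (p:ℤ) → (p:ℤ) < j → j ≤ (p:ℤ) + (q:ℤ) →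
        |w i| < |w j| := by
      intro i j h1 h2 h3 h4
      have hb1 := hmidw i j h2 h3 h4
      have hb2 := hmidw (-i) j (by rw [abs_neg]; exact h2) h3 h4
      have hwn : w (-i) = - w i := hwsp.1 i
      rw [hwn] at hb2
      have hi0 : i ≠ 0 := by intro hc; rw [hc, abs_zero] at h1; omega
      have hne : |w i| ≠ |w j| := sp_abs_ne hwsp
        (by rw [abs_of_pos (by omega : 0 < j)]; omega)
      exact bNeg_abs_lt (sp_ne_zero hwsp hi0) hne (hb1.trans hb2.symm)
    -- pigeonhole 1 : low block stays low
    have Hlow : ∀ i : ℤ, 1 ≤ |i| → |i| ≤ (p:ℤ) → |w i| ≤ (p:ℤ) := by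
      intro i h1 h2
      by_contra hc
      push_neg at hc
      have habsm : |(|i|)| = |i| := abs_abs i
      have hwm : |w (|i|)| = |w i| := sp_abs_eq hwsp habsm
      have hub : |w (|i|)| ≤ (p:ℤ) + (q:ℤ) := by
        have h3 := sp_abs_le hwsp (i := |i|) (by rw [habsm]; push_cast; omega)
        push_cast at h3; exact h3
      have hmnot : |i| ∉ Finset.Icc ((p:ℤ)+1) ((p:ℤ)+(q:ℤ)) := by
        simp only [Finset.mem_Icc]; omega
      have hinj : Set.InjOn (fun a => |w a|)
          ↑(insert (|i|) (Finset.Icc ((p:ℤ)+1) ((p:ℤ)+(q:ℤ)))) := by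
        intro a ha b hb hab
        simp only [Finset.coe_insert, Set.mem_insert_iff, Finset.coe_Icc, Set.mem_Icc] at ha hb
        dsimp only at hab
        have h6 : |a| = |b| := by
          by_contra hne
          exact sp_abs_ne hwsp hne hab
        have ha1 : 1 ≤ a := by rcases ha with rfl | ha <;> omega
        have hb1 : 1 ≤ b := by rcases hb with rfl | hb <;> omega
        rw [abs_of_pos (by omega : 0 < a), abs_of_pos (by omega : 0 < b)] at h6
        exact h6
      have hsub : (insert (|i|) (Finset.Icc ((p:ℤ)+1) ((p:ℤ)+(q:ℤ)))).image (fun a => |w a|)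
          ⊆ Finset.Icc ((p:ℤ)+1) ((p:ℤ)+(q:ℤ)) := by
        intro b hb
        obtain ⟨a, ha, rfl⟩ := Finset.mem_image.1 hb
        rcases Finset.mem_insert.1 ha with rfl | ha
        · simp only [Finset.mem_Icc]; omega
        · simp only [Finset.mem_Icc] at ha ⊢
          have h5 : |w (|i|)| < |w a| := hkey (|i|) a (by rw [habsm]; exact h1)
            (by rw [habsm]; exact h2) (by omega) (by omega)
          have h7 : |w a| ≤ (p:ℤ) + (q:ℤ) := by
            have h8 := sp_abs_le hwsp (i := a)
              (by rw [abs_of_pos (by omega : 0 < a)]; push_cast; omega)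
            push_cast at h8; exact h8
          omega
      have hcard := Finset.card_le_card hsub
      rw [Finset.card_image_of_injOn hinj, Finset.card_insert_of_notMem hmnot,
        Int.card_Icc] at hcard
      omega
    have Hlow0 : ∀ i : ℤ, |i| ≤ (p:ℤ) → |w i| ≤ (p:ℤ) := by
      intro i h
      rcases eq_or_ne i 0 with rfl | hne
      · rw [sp_zero hwsp, abs_zero]; positivity
      · exact Hlow i (by have := abs_pos.2 hne; omega) h
    -- pigeonhole 2 : high block stays high
    have Hhigh : ∀ a : ℤ, (p:ℤ) < |a| → |a| ≤ (p:ℤ) + (q:ℤ) →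
        (p:ℤ) < |w a| ∧ |w a| ≤ (p:ℤ) + (q:ℤ) := by
      intro a h1 h2
      have hub : |w a| ≤ (p:ℤ) + (q:ℤ) := by
        have h3 := sp_abs_le hwsp (i := a) (by push_cast; omega)
        push_cast at h3; exact h3
      refine ⟨?_, hub⟩
      by_contra hc
      push_neg at hc
      have habsm : |(|a|)| = |a| := abs_abs a
      have hwm : |w (|a|)| = |w a| := sp_abs_eq hwsp habsm
      have hmnot : |a| ∉ Finset.Icc (1:ℤ) (p:ℤ) := by
        simp only [Finset.mem_Icc]; omega
      have hinj : Set.InjOn (fun b => |w b|)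
          ↑(insert (|a|) (Finset.Icc (1:ℤ) (p:ℤ))) := by
        intro c hc1 d hd1 hcd
        simp only [Finset.coe_insert, Set.mem_insert_iff, Finset.coe_Icc, Set.mem_Icc]
          at hc1 hd1
        dsimp only at hcd
        have h6 : |c| = |d| := by
          by_contra hne
          exact sp_abs_ne hwsp hne hcd
        have hc2 : 1 ≤ c := by rcases hc1 with rfl | hc1 <;> omega
        have hd2 : 1 ≤ d := by rcases hd1 with rfl | hd1 <;> omega
        rw [abs_of_pos (by omega : 0 < c), abs_of_pos (by omega : 0 < d)] at h6
        exact h6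
      have hsub : (insert (|a|) (Finset.Icc (1:ℤ) (p:ℤ))).image (fun b => |w b|)
          ⊆ Finset.Icc (1:ℤ) (p:ℤ) := by
        intro b hb
        obtain ⟨c, hcmem, rfl⟩ := Finset.mem_image.1 hb
        rcases Finset.mem_insert.1 hcmem with rfl | hcmem
        · simp only [Finset.mem_Icc]
          have h9 : w (|a|) ≠ 0 := sp_ne_zero hwsp (by omega)
          have := abs_pos.2 h9
          omega
        · simp only [Finset.mem_Icc] at hcmem ⊢
          have h9 : w c ≠ 0 := sp_ne_zero hwsp (by omega)
          have h10 := abs_pos.2 h9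
          have h11 := Hlow0 c (by rw [abs_of_pos (by omega : 0 < c)]; omega)
          omega
      have hcard := Finset.card_le_card hsub
      rw [Finset.card_image_of_injOn hinj, Finset.card_insert_of_notMem hmnot,
        Int.card_Icc] at hcard
      omega
    -- inverse bounds
    have H4 : ∀ a : ℤ, (p:ℤ) < |a| → |a| ≤ (p:ℤ) + (q:ℤ) →
        (p:ℤ) < |w⁻¹ a| ∧ |w⁻¹ a| ≤ (p:ℤ) + (q:ℤ) := by
      intro a h1 h2
      have hub : |w⁻¹ a| ≤ (p:ℤ) + (q:ℤ) := by
        have h3 := sp_abs_le (sp_inv hwsp) (i := a) (by push_cast; omega)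
        push_cast at h3; exact h3
      refine ⟨?_, hub⟩
      by_contra hc
      push_neg at hc
      have h5 := Hlow0 _ hc
      rw [Equiv.Perm.apply_inv_self] at h5
      omega
    have H2 : ∀ i : ℤ, |i| ≤ (p:ℤ) → |w⁻¹ i| ≤ (p:ℤ) := by
      intro i h
      by_contra hc
      push_neg at hc
      rcases le_or_gt |w⁻¹ i| ((p:ℤ) + (q:ℤ)) with h5 | h5
      · have h6 := (Hhigh _ hc h5).1
        rw [Equiv.Perm.apply_inv_self] at h6
        omega
      · have h6 : w (w⁻¹ i) = w⁻¹ i := hwsp.2 _ (by push_cast; omega)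
        rw [Equiv.Perm.apply_inv_self] at h6
        rw [← h6] at h5
        omega
    -- build the factors
    have hxsp : mkX p w Hlow0 H2 ∈ SignedPerm p := mkX_sp Hlow0 H2 hwsp.1
    have hysp : mkY p q w Hhigh H4 ∈ SignedPerm q := mkY_sp Hhigh H4 hwsp.1
    have hsprod : IsSProd p q (mkX p w Hlow0 H2) (mkY p q w Hhigh H4) w := by
      refine ⟨hwsp, ?_, ?_⟩
      · intro a h1 h2
        rw [mkX_apply, if_pos (by rw [abs_of_pos (by omega : 0 < a)]; omega)]
      · intro a h1 h2
        have ha0 : a - (p:ℤ) ≠ 0 := by omega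
        have hwa : (p:ℤ) < |w a| :=
          (Hhigh a (by rw [abs_of_pos (by omega : 0 < a)]; omega)
            (by rw [abs_of_pos (by omega : 0 < a)]; omega)).1
        have hsh : shiftFun p (a - p) = a := by
          rw [shift_of_pos (by omega : (0:ℤ) < a - p)]; ring
        rw [mkY_apply,
          if_pos (by rw [abs_of_pos (by omega : (0:ℤ) < a - p)]; exact ⟨by omega, by omega⟩),
          hsh, shift_unsh hwa]
    -- interval inclusions
    have incl1 : NS p u ⊆ NS p (mkX p w Hlow0 H2) := by
      intro r hr
      rw [mem_NS] at hr ⊢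
      obtain ⟨⟨h1, h2⟩, hb⟩ := hr
      have hr2pos : 0 < r.2 := lt_of_le_of_lt (abs_nonneg _) h1
      have hb1 : |r.1| ≤ (p:ℤ) := by omega
      have hb2 : |r.2| ≤ (p:ℤ) := by rw [abs_of_pos hr2pos]; omega
      refine ⟨⟨h1, h2⟩, ?_⟩
      have l1 : uv r.1 = u r.1 := sprod_low hu huv hb1
      have l2 : uv r.2 = u r.2 := sprod_low hu huv hb2
      have hmem : r ∈ NS (p+q) uv :=
        mem_NS.2 ⟨⟨h1, by push_cast; omega⟩, by rw [l1, l2]; exact hb⟩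
      have h3 := hw1 hmem
      rw [mem_NS] at h3
      have hx1 : mkX p w Hlow0 H2 r.1 = w r.1 := by rw [mkX_apply, if_pos hb1]
      have hx2 : mkX p w Hlow0 H2 r.2 = w r.2 := by rw [mkX_apply, if_pos hb2]
      rw [hx1, hx2]
      exact h3.2
    have incl2 : NS p (mkX p w Hlow0 H2) ⊆ NS p u' := by
      intro r hr
      rw [mem_NS] at hr ⊢
      obtain ⟨⟨h1, h2⟩, hb⟩ := hr
      have hr2pos : 0 < r.2 := lt_of_le_of_lt (abs_nonneg _) h1
      have hb1 : |r.1| ≤ (p:ℤ) := by omega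
      have hb2 : |r.2| ≤ (p:ℤ) := by rw [abs_of_pos hr2pos]; omega
      refine ⟨⟨h1, h2⟩, ?_⟩
      have hx1 : mkX p w Hlow0 H2 r.1 = w r.1 := by rw [mkX_apply, if_pos hb1]
      have hx2 : mkX p w Hlow0 H2 r.2 = w r.2 := by rw [mkX_apply, if_pos hb2]
      rw [hx1, hx2] at hb
      have hmem : r ∈ NS (p+q) w := mem_NS.2 ⟨⟨h1, by push_cast; omega⟩, hb⟩
      have h3 := hw2 hmem
      rw [mem_NS] at h3
      have l1 : uv' r.1 = u' r.1 := sprod_low hu' huv' hb1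
      have l2 : uv' r.2 = u' r.2 := sprod_low hu' huv' hb2
      rw [← l1, ← l2]
      exact h3.2
    have incl3 : NS q v ⊆ NS q (mkY p q w Hhigh H4) := by
      intro r hr
      rw [mem_NS] at hr ⊢
      obtain ⟨⟨h1, h2⟩, hb⟩ := hr
      have hr2pos : 0 < r.2 := lt_of_le_of_lt (abs_nonneg _) h1
      refine ⟨⟨h1, h2⟩, ?_⟩
      by_cases hz : r.1 = 0
      · have hvneg : v r.2 < 0 := by
          rw [hz, sp_zero hv] at hb
          exact (bNeg_zero_left (sp_ne_zero hv (by omega))).1 hb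
        have hk : r.2 ∈ K := (hKv r.2 (by omega) h2).1 hvneg
        have hbw : bNeg (w 0) (w (r.2 + p)) := by
          refine (hmidw 0 (r.2 + p) (by rw [abs_zero]; positivity) (by omega) (by omega)).2 ?_
          rw [show r.2 + (p:ℤ) - p = r.2 by ring]
          exact hk
        have e2 := sprod_mid_iff hxsp hysp hsprod (i := (0:ℤ))
          (by rw [abs_zero]; positivity) (by omega : (p:ℤ) < r.2 + p) (by omega)
        have hyneg := e2.1 hbw
        rw [show r.2 + (p:ℤ) - p = r.2 by ring] at hyneg
        rw [hz, sp_zero hysp]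
        exact (bNeg_zero_left (sp_ne_zero hysp (by omega))).2 hyneg
      · have hz1 : 1 ≤ |r.1| := by have := abs_pos.2 hz; omega
        have hsa : (p:ℤ) < |shiftFun p r.1| := by rw [shift_abs hz]; omega
        have hsb : |shiftFun p r.1| < r.2 + p := by rw [shift_abs hz]; omega
        have hsc : r.2 + (p:ℤ) ≤ (p:ℤ) + (q:ℤ) := by omega
        have e1 := sprod_high_iff hv huv hsa hsb hsc
        rw [unsh_shift hz, show r.2 + (p:ℤ) - p = r.2 by ring] at e1
        have hmem : ((shiftFun p r.1, r.2 + (p:ℤ)) : ℤ × ℤ) ∈ NS (p+q) uv :=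
          mem_NS.2 ⟨⟨hsb, by push_cast; omega⟩, e1.2 hb⟩
        have h3 := hw1 hmem
        rw [mem_NS] at h3
        have e2 := sprod_high_iff hysp hsprod hsa hsb hsc
        rw [unsh_shift hz, show r.2 + (p:ℤ) - p = r.2 by ring] at e2
        exact e2.1 h3.2
    have incl4 : NS q (mkY p q w Hhigh H4) ⊆ NS q v' := by
      intro r hr
      rw [mem_NS] at hr ⊢
      obtain ⟨⟨h1, h2⟩, hb⟩ := hr
      have hr2pos : 0 < r.2 := lt_of_le_of_lt (abs_nonneg _) h1
      refine ⟨⟨h1, h2⟩, ?_⟩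
      by_cases hz : r.1 = 0
      · have hyneg : mkY p q w Hhigh H4 r.2 < 0 := by
          rw [hz, sp_zero hysp] at hb
          exact (bNeg_zero_left (sp_ne_zero hysp (by omega))).1 hb
        have e2 := sprod_mid_iff hxsp hysp hsprod (i := (0:ℤ))
          (by rw [abs_zero]; positivity) (by omega : (p:ℤ) < r.2 + p) (by omega)
        have hbw : bNeg (w 0) (w (r.2 + p)) := by
          refine e2.2 ?_
          rw [show r.2 + (p:ℤ) - p = r.2 by ring]
          exact hyneg
        have hk : (r.2 + (p:ℤ) - p) ∈ K :=
          (hmidw 0 (r.2 + p) (by rw [abs_zero]; positivity) (by omega) (by omega)).1 hbw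
        rw [show r.2 + (p:ℤ) - p = r.2 by ring] at hk
        have hv'neg : v' r.2 < 0 := (hKv' r.2 (by omega) h2).2 hk
        rw [hz, sp_zero hv']
        exact (bNeg_zero_left (sp_ne_zero hv' (by omega))).2 hv'neg
      · have hz1 : 1 ≤ |r.1| := by have := abs_pos.2 hz; omega
        have hsa : (p:ℤ) < |shiftFun p r.1| := by rw [shift_abs hz]; omega
        have hsb : |shiftFun p r.1| < r.2 + p := by rw [shift_abs hz]; omega
        have hsc : r.2 + (p:ℤ) ≤ (p:ℤ) + (q:ℤ) := by omega
        have e2 := sprod_high_iff hysp hsprod hsa hsb hsc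
        rw [unsh_shift hz, show r.2 + (p:ℤ) - p = r.2 by ring] at e2
        have hmem : ((shiftFun p r.1, r.2 + (p:ℤ)) : ℤ × ℤ) ∈ NS (p+q) w :=
          mem_NS.2 ⟨⟨hsb, by push_cast; omega⟩, e2.2 hb⟩
        have h3 := hw2 hmem
        rw [mem_NS] at h3
        have e1 := sprod_high_iff hv' huv' hsa hsb hsc
        rw [unsh_shift hz, show r.2 + (p:ℤ) - p = r.2 by ring] at e1
        exact e1.1 h3.2
    exact ⟨mkX p w Hlow0 H2, mkY p q w Hhigh H4, hxsp,
      (wle_char hu hxsp).2 incl1, (wle_char hxsp hu').2 incl2, hysp,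
      (wle_char hv hysp).2 incl3, (wle_char hysp hv').2 incl4, hsprod⟩
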